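/- The function C_z = shc(2z v₁)·v₁v₃ - v₂² Poisson-commutes with v₁, v₂, v₃ with respect to the deformed bracket {v₁,v₂}_z = -shc(2z v₁)v₁, {v₁,v₃}_z = -2v₂, {v₂,v₃}_z = -cosh(2z v₁)v₃ on ℝ³; that is, {C_z, v_i}_z = 0 for i = 1,2,3. -/

import Mathlib

/-- The cardinal hyperbolic sine function. -/
noncomputable def shc (ξ : ℝ) : ℝ := if ξ = 0 then 1 else Real.sinh ξ / ξ

noncomputable def d1 (f : ℝ × ℝ × ℝ → ℝ) (p : ℝ × ℝ × ℝ) : ℝ :=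
  deriv (fun t => f (t, p.2.1, p.2.2)) p.1
noncomputable def d2 (f : ℝ × ℝ × ℝ → ℝ) (p : ℝ × ℝ × ℝ) : ℝ :=
  deriv (fun t => f (p.1, t, p.2.2)) p.2.1
noncomputable def d3 (f : ℝ × ℝ × ℝ → ℝ) (p : ℝ × ℝ × ℝ) : ℝ :=
  deriv (fun t => f (p.1, p.2.1, t)) p.2.2

/-- The deformed Poisson bracket `{·,·}_z` on `ℝ³` determined on coordinates by
`{v₁,v₂}_z = -shc(2zv₁)v₁`, `{v₁,v₃}_z = -2v₂`, `{v₂,v₃}_z = -cosh(2zv₁)v₃`. -/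
noncomputable def lpbz (z : ℝ) (f g : ℝ × ℝ × ℝ → ℝ) (p : ℝ × ℝ × ℝ) : ℝ :=
  (-(shc (2 * z * p.1) * p.1)) * (d1 f p * d2 g p - d2 f p * d1 g p)
    + (-2 * p.2.1) * (d1 f p * d3 g p - d3 f p * d1 g p)
    + (-(Real.cosh (2 * z * p.1) * p.2.2)) * (d2 f p * d3 g p - d3 f p * d2 g p)

lemma shc_mul_hasDerivAt (z t : ℝ) :
    HasDerivAt (fun s => shc (2 * z * s) * s) (Real.cosh (2 * z * t)) t := by
  rcases eq_or_ne z 0 with hz | hz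
  · subst hz
    simpa [shc] using hasDerivAt_id' t
  · have heq : (fun s => shc (2 * z * s) * s)
        = fun s => Real.sinh (2 * z * s) / (2 * z) := by
      funext s
      rcases eq_or_ne s 0 with hs | hs
      · simp [hs]
      · have hne : 2 * z * s ≠ 0 := mul_ne_zero (mul_ne_zero two_ne_zero hz) hs
        rw [shc, if_neg hne]
        field_simp
    rw [heq]
    have h1 : HasDerivAt (fun s => 2 * z * s) (2 * z) t := by
      simpa using (hasDerivAt_id t).const_mul (2 * z)
    have h2 := ((Real.hasDerivAt_sinh (2 * z * t)).comp t h1).div_const (2 * z)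
    rw [mul_div_cancel_right₀ _ (mul_ne_zero two_ne_zero hz)] at h2
    exact h2

lemma d1C (z : ℝ) (p : ℝ × ℝ × ℝ) :
    d1 (fun v => shc (2 * z * v.1) * v.1 * v.2.2 - v.2.1 ^ 2) p
      = Real.cosh (2 * z * p.1) * p.2.2 := by
  have h := (((shc_mul_hasDerivAt z p.1).mul_const p.2.2).sub_const (p.2.1 ^ 2))
  simpa [d1, mul_assoc] using h.deriv

lemma d2C (z : ℝ) (p : ℝ × ℝ × ℝ) :
    d2 (fun v => shc (2 * z * v.1) * v.1 * v.2.2 - v.2.1 ^ 2) p = -(2 * p.2.1) := by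
  have h := (hasDerivAt_pow 2 p.2.1).const_sub (shc (2 * z * p.1) * p.1 * p.2.2)
  simp only [d2]
  rw [h.deriv]; push_cast; ring

lemma d3C (z : ℝ) (p : ℝ × ℝ × ℝ) :
    d3 (fun v => shc (2 * z * v.1) * v.1 * v.2.2 - v.2.1 ^ 2) p
      = shc (2 * z * p.1) * p.1 := by
  have h := (((hasDerivAt_id p.2.2).const_mul (shc (2 * z * p.1) * p.1)).sub_const
    (p.2.1 ^ 2))
  simpa [d3] using h.deriv

/-- The deformed Casimir `C_z = shc(2zv₁)v₁v₃ - v₂²` Poisson-commutes with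
`v₁, v₂, v₃` relative to the deformed bracket `{·,·}_z`. -/
theorem sl2_deformed_casimir (z : ℝ) :
    ∀ p : ℝ × ℝ × ℝ,
      lpbz z (fun v => shc (2 * z * v.1) * v.1 * v.2.2 - v.2.1 ^ 2) (fun v => v.1) p = 0 ∧
      lpbz z (fun v => shc (2 * z * v.1) * v.1 * v.2.2 - v.2.1 ^ 2) (fun v => v.2.1) p = 0 ∧
      lpbz z (fun v => shc (2 * z * v.1) * v.1 * v.2.2 - v.2.1 ^ 2) (fun v => v.2.2) p = 0 := by
  intro p
  refine ⟨?_, ?_, ?_⟩ <;>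
  · simp only [lpbz, d1C, d2C, d3C]
    simp only [d1, d2, d3, deriv_const, deriv_id'']
    ring
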